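/- arXiv:1804.10336 — 2 statements merged into one kernel-verified Lean document; each statement's English description precedes it below -/
import Mathlib

section
/- Let G be a connected cubic graph and let T be a triangle of G such that every vertex of T lies in some triangle of G other than T. Then G is isomorphic to K4. -/
open Finset SimpleGraph

lemma third_neighbor {V : Type*} [Fintype V] [DecidableEq V] (G : SimpleGraph V)
    [DecidableRel G.Adj] {v x y : V} (hdeg : G.degree v = 3) (hxy : x ≠ y)
    (hx : G.Adj v x) (hy : G.Adj v y) :
    ∃ z, G.Adj v z ∧ z ≠ x ∧ z ≠ y ∧ G.neighborFinset v = {x, y, z} := by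
  have hsub : ({x, y} : Finset V) ⊆ G.neighborFinset v := by
    intro w hw
    simp only [mem_insert, mem_singleton] at hw
    rcases hw with rfl | rfl <;> simp [hx, hy]
  have hcard2 : ({x, y} : Finset V).card = 2 := by
    rw [card_insert_of_notMem (by simp [hxy]), card_singleton]
  have hcard : (G.neighborFinset v \ {x, y}).card = 1 := by
    rw [card_sdiff_of_subset hsub, card_neighborFinset_eq_degree, hdeg, hcard2]
  obtain ⟨z, hz⟩ := card_eq_one.mp hcard
  have hzm : z ∈ G.neighborFinset v \ {x, y} := by rw [hz]; simp
  rw [mem_sdiff] at hzm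
  have hzadj : G.Adj v z := (mem_neighborFinset _ _ _).mp hzm.1
  simp only [mem_insert, mem_singleton, not_or] at hzm
  refine ⟨z, hzadj, hzm.2.1, hzm.2.2, ?_⟩
  have hu := sdiff_union_of_subset hsub
  rw [hz] at hu
  rw [← hu]
  ext w; simp; tauto

lemma other_tri {V : Type*} [Fintype V] [DecidableEq V] (G : SimpleGraph V)
    [DecidableRel G.Adj] {v x y z : V} {T' : Finset V}
    (hN : G.neighborFinset v = {x, y, z}) (hzx : z ≠ x) (hzy : z ≠ y)
    (hT' : G.IsNClique 3 T') (hv : v ∈ T') (hne : T' ≠ {v, x, y}) :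
    G.Adj z x ∨ G.Adj z y := by
  have hvz : G.Adj v z := by
    have : z ∈ G.neighborFinset v := by rw [hN]; simp
    exact (mem_neighborFinset _ _ _).mp this
  have hsub : T' ⊆ insert v (G.neighborFinset v) := by
    intro w hw
    by_cases hwv : w = v
    · subst hwv; simp
    · have : G.Adj v w := hT'.1 hv hw (Ne.symm hwv)
      simp [mem_neighborFinset, this]
  rw [hN] at hsub
  have hzT' : z ∈ T' := by
    by_contra hzT'
    apply hne
    apply Finset.eq_of_subset_of_card_le
    · intro w hw
      have hwm := hsub hw
      simp only [mem_insert, mem_singleton] at hwm ⊢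
      rcases hwm with rfl | rfl | rfl | rfl
      · left; rfl
      · right; left; rfl
      · right; right; rfl
      · exact absurd hw hzT'
    · have h1 : ({v, x, y} : Finset V).card ≤ ({x, y} : Finset V).card + 1 :=
        card_insert_le _ _
      have h2 : ({x, y} : Finset V).card ≤ ({y} : Finset V).card + 1 :=
        card_insert_le _ _
      have h3 : ({y} : Finset V).card = 1 := card_singleton _
      rw [hT'.2]; omega
  have hvzne : v ≠ z := hvz.ne
  have hvzsub : ({v, z} : Finset V) ⊆ T' := by
    intro w hw; simp only [mem_insert, mem_singleton] at hw
    rcases hw with rfl | rfl <;> assumption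
  have hcard : (T' \ {v, z}).card = 1 := by
    rw [card_sdiff_of_subset hvzsub, hT'.2, card_insert_of_notMem (by simp [hvzne]),
      card_singleton]
  obtain ⟨w, hw⟩ := card_eq_one.mp hcard
  have hwm : w ∈ T' \ {v, z} := by rw [hw]; simp
  rw [mem_sdiff] at hwm
  simp only [mem_insert, mem_singleton, not_or] at hwm
  have hwT' : w ∈ T' := hwm.1
  have hwv : w ≠ v := hwm.2.1
  have hwz : w ≠ z := hwm.2.2
  have hwmem := hsub hwT'
  simp only [mem_insert, mem_singleton] at hwmem
  have hadj : G.Adj z w := hT'.1 hzT' hwT' (Ne.symm hwz)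
  rcases hwmem with rfl | rfl | rfl | rfl
  · exact absurd rfl hwv
  · exact Or.inl hadj
  · exact Or.inr hadj
  · exact absurd rfl hwz

set_option maxHeartbeats 1600000 in
/-- If `T` is a triangle of a connected cubic graph `G` such that every vertex of `T`
lies in some triangle of `G` other than `T`, then `G` is isomorphic to `K₄`. -/
theorem stmt_3 {V : Type*} [Fintype V] [DecidableEq V] (G : SimpleGraph V)
    [DecidableRel G.Adj] (hconn : G.Connected) (hcubic : ∀ v, G.degree v = 3)
    (T : Finset V) (hT : G.IsNClique 3 T)
    (h : ∀ v ∈ T, ∃ T' : Finset V, G.IsNClique 3 T' ∧ T' ≠ T ∧ v ∈ T') :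
    Nonempty (G ≃g (⊤ : SimpleGraph (Fin 4))) := by
  obtain ⟨a, b, c, hab, hac, hbc, rfl⟩ := Finset.card_eq_three.mp hT.2
  have haT : a ∈ ({a, b, c} : Finset V) := by simp
  have hbT : b ∈ ({a, b, c} : Finset V) := by simp
  have hcT : c ∈ ({a, b, c} : Finset V) := by simp
  have hAab : G.Adj a b := hT.1 (by simp) (by simp) hab
  have hAac : G.Adj a c := hT.1 (by simp) (by simp) hac
  have hAbc : G.Adj b c := hT.1 (by simp) (by simp) hbc
  obtain ⟨da, hAada, hdab, hdac, hNa⟩ := third_neighbor G (hcubic a) hbc hAab hAac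
  obtain ⟨db, hAbdb, hdba, hdbc, hNb⟩ := third_neighbor G (hcubic b) hac hAab.symm hAbc
  obtain ⟨dc, hAcdc, hdca, hdcb, hNc⟩ := third_neighbor G (hcubic c) hab hAac.symm hAbc.symm
  -- step for a
  obtain ⟨Ta, hTa, hTane, haTa⟩ := h a haT
  have hstepa := other_tri G hNa hdab hdac hTa haTa (by simpa using hTane)
  obtain ⟨Tb, hTb, hTbne, hbTb⟩ := h b hbT
  have hstepb := other_tri G hNb hdba hdbc hTb hbTb (by
    intro hEq; apply hTbne; rw [hEq]; ext w; simp; tauto)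
  obtain ⟨Tc, hTc, hTcne, hcTc⟩ := h c hcT
  have hstepc := other_tri G hNc hdca hdcb hTc hcTc (by
    intro hEq; apply hTcne; rw [hEq]; ext w; simp; tauto)
  -- convert adjacency to equalities
  have hda : da = db ∨ da = dc := by
    rcases hstepa with h1 | h1
    · left
      have : da ∈ G.neighborFinset b := (mem_neighborFinset _ _ _).mpr h1.symm
      rw [hNb] at this
      simp only [mem_insert, mem_singleton] at this
      rcases this with h2 | h2 | h2
      · exact absurd h2 hAada.ne'
      · exact absurd h2 hdac
      · exact h2
    · right
      have : da ∈ G.neighborFinset c := (mem_neighborFinset _ _ _).mpr h1.symm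
      rw [hNc] at this
      simp only [mem_insert, mem_singleton] at this
      rcases this with h2 | h2 | h2
      · exact absurd h2 hAada.ne'
      · exact absurd h2 hdab
      · exact h2
  have hdb : db = da ∨ db = dc := by
    rcases hstepb with h1 | h1
    · left
      have : db ∈ G.neighborFinset a := (mem_neighborFinset _ _ _).mpr h1.symm
      rw [hNa] at this
      simp only [mem_insert, mem_singleton] at this
      rcases this with h2 | h2 | h2
      · exact absurd h2 hAbdb.ne'
      · exact absurd h2 hdbc
      · exact h2
    · right
      have : db ∈ G.neighborFinset c := (mem_neighborFinset _ _ _).mpr h1.symm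
      rw [hNc] at this
      simp only [mem_insert, mem_singleton] at this
      rcases this with h2 | h2 | h2
      · exact absurd h2 hdba
      · exact absurd h2 hAbdb.ne'
      · exact h2
  -- define d
  have hkey : da = db ∧ da = dc := by
    rcases hda with h1 | h1
    · refine ⟨h1, ?_⟩
      rcases hdb with h2 | h2
      · rcases hstepc with h3 | h3
        · have : dc ∈ G.neighborFinset a := (mem_neighborFinset _ _ _).mpr h3.symm
          rw [hNa] at this
          simp only [mem_insert, mem_singleton] at this
          rcases this with h4 | h4 | h4
          · exact absurd h4 hdcb
          · exact absurd h4 hAcdc.ne'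
          · exact h4.symm
        · have : dc ∈ G.neighborFinset b := (mem_neighborFinset _ _ _).mpr h3.symm
          rw [hNb] at this
          simp only [mem_insert, mem_singleton] at this
          rcases this with h4 | h4 | h4
          · exact absurd h4 hdca
          · exact absurd h4 hAcdc.ne'
          · exact h1.trans h4.symm
      · exact h1.trans h2
    · exact ⟨by rcases hdb with h2 | h2; exact h2.symm; exact h1.trans h2.symm, h1⟩
  obtain ⟨hk1, hk2⟩ := hkey
  subst hk1
  subst hk2
  -- now da plays the role of d
  have hAad : G.Adj a da := hAada
  have hAbd : G.Adj b da := hAbdb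
  have hAcd : G.Adj c da := hAcdc
  have hdna : da ≠ a := hAad.ne'
  have hdnb : da ≠ b := hdab
  have hdnc : da ≠ c := hdac
  have hNd : G.neighborFinset da = {a, b, c} := by
    symm
    apply Finset.eq_of_subset_of_card_le
    · intro w hw
      simp only [mem_insert, mem_singleton] at hw
      rw [mem_neighborFinset]
      rcases hw with rfl | rfl | rfl
      · exact hAad.symm
      · exact hAbd.symm
      · exact hAcd.symm
    · rw [card_neighborFinset_eq_degree, hcubic, hT.2]
  have closed : ∀ u w, G.Adj u w → (u = a ∨ u = b ∨ u = c ∨ u = da) →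
      (w = a ∨ w = b ∨ w = c ∨ w = da) := by
    intro u w huw hu
    have hwm : w ∈ G.neighborFinset u := (mem_neighborFinset _ _ _).mpr huw
    rcases hu with rfl | rfl | rfl | rfl
    · rw [hNa] at hwm
      simp only [mem_insert, mem_singleton] at hwm
      rcases hwm with rfl | rfl | rfl
      · exact Or.inr (Or.inl rfl)
      · exact Or.inr (Or.inr (Or.inl rfl))
      · exact Or.inr (Or.inr (Or.inr rfl))
    · rw [hNb] at hwm
      simp only [mem_insert, mem_singleton] at hwm
      rcases hwm with rfl | rfl | rfl
      · exact Or.inl rfl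
      · exact Or.inr (Or.inr (Or.inl rfl))
      · exact Or.inr (Or.inr (Or.inr rfl))
    · rw [hNc] at hwm
      simp only [mem_insert, mem_singleton] at hwm
      rcases hwm with rfl | rfl | rfl
      · exact Or.inl rfl
      · exact Or.inr (Or.inl rfl)
      · exact Or.inr (Or.inr (Or.inr rfl))
    · rw [hNd] at hwm
      simp only [mem_insert, mem_singleton] at hwm
      rcases hwm with rfl | rfl | rfl
      · exact Or.inl rfl
      · exact Or.inr (Or.inl rfl)
      · exact Or.inr (Or.inr (Or.inl rfl))
  have hall : ∀ x : V, x = a ∨ x = b ∨ x = c ∨ x = da := by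
    have walkind : ∀ (u x : V) (_ : G.Walk u x), (u = a ∨ u = b ∨ u = c ∨ u = da) →
        (x = a ∨ x = b ∨ x = c ∨ x = da) := by
      intro u x w
      induction w with
      | nil => exact id
      | cons huv _ ih => intro hu; exact ih (closed _ _ huv hu)
    intro x
    obtain ⟨w⟩ := hconn.preconnected a x
    exact walkind a x w (Or.inl rfl)
  have hadj : ∀ x y : V, x ≠ y → G.Adj x y := by
    intro x y hxy
    rcases hall x with rfl | rfl | rfl | rfl <;> rcases hall y with rfl | rfl | rfl | rfl <;>
      first
        | exact absurd rfl hxy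
        | exact hAab | exact hAab.symm | exact hAac | exact hAac.symm
        | exact hAbc | exact hAbc.symm | exact hAad | exact hAad.symm
        | exact hAbd | exact hAbd.symm | exact hAcd | exact hAcd.symm
  have hG : G = ⊤ := by
    ext x y
    simp only [top_adj]
    exact ⟨SimpleGraph.Adj.ne, hadj x y⟩
  have huniv : (Finset.univ : Finset V) = {a, b, c, da} := by
    ext x
    simp only [mem_univ, mem_insert, mem_singleton, true_iff]
    exact hall x
  have hcard : Fintype.card V = 4 := by
    rw [← Finset.card_univ, huniv]
    rw [card_insert_of_notMem (by simp [hab, hac, Ne.symm hdna]),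
      card_insert_of_notMem (by simp [hbc, Ne.symm hdnb]),
      card_insert_of_notMem (by simp [Ne.symm hdnc]), card_singleton]
  have e : V ≃ Fin 4 := Fintype.equivFinOfCardEq hcard
  rw [hG]
  exact ⟨SimpleGraph.Iso.completeGraph e⟩
end

section
/- Let G be a connected cubic graph and let T be a triangle of G. Then the number of vertices of T that lie in some triangle of G other than T is 0, 2, or 3 (never exactly 1); and if this number is 3, then G is isomorphic to K4. -/
open SimpleGraph

lemma extNbr {V : Type*} [Fintype V] [DecidableEq V] (G : SimpleGraph V) [DecidableRel G.Adj]
    (hcubic : ∀ v, G.degree v = 3) {v x y : V} (hvx : G.Adj v x) (hvy : G.Adj v y)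
    (hxy : x ≠ y) : ∃ d, G.neighborFinset v = {x, y, d} ∧ d ≠ x ∧ d ≠ y ∧ d ≠ v := by
  have hx : x ∈ G.neighborFinset v := by simpa using hvx
  have hy : y ∈ G.neighborFinset v := by simpa using hvy
  have hcard : (G.neighborFinset v).card = 3 := by
    rw [G.card_neighborFinset_eq_degree]; exact hcubic v
  have hsub : ({x, y} : Finset V) ⊆ G.neighborFinset v := by
    intro z hz; simp at hz; rcases hz with h | h <;> subst h <;> assumption
  have h2 : ({x, y} : Finset V).card = 2 := Finset.card_pair hxy
  have h1 : (G.neighborFinset v \ {x, y}).card = 1 := by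
    rw [Finset.card_sdiff_of_subset hsub, hcard, h2]
  obtain ⟨d, hd⟩ := Finset.card_eq_one.mp h1
  have hdm : d ∈ G.neighborFinset v \ ({x,y} : Finset V) := by rw [hd]; simp
  simp only [Finset.mem_sdiff, Finset.mem_insert, Finset.mem_singleton] at hdm
  obtain ⟨hdn, hdxy⟩ := hdm
  push_neg at hdxy
  have hadj : G.Adj v d := by simpa using hdn
  refine ⟨d, ?_, hdxy.1, hdxy.2, fun h => G.loopless.irrefl v (h ▸ hadj)⟩
  symm
  apply Finset.eq_of_subset_of_card_le
  · intro z hz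
    simp only [Finset.mem_insert, Finset.mem_singleton] at hz
    rcases hz with h | h | h <;> subst h
    · exact hx
    · exact hy
    · exact hdn
  · rw [hcard]
    rw [Finset.card_insert_of_notMem (by simp [hxy, Ne.symm hdxy.1]),
      Finset.card_insert_of_notMem (by simp [Ne.symm hdxy.2])]
    simp

lemma otherTri {V : Type*} [Fintype V] [DecidableEq V] (G : SimpleGraph V) [DecidableRel G.Adj]
    (hcubic : ∀ v, G.degree v = 3) {T T' : Finset V} (hT : G.IsNClique 3 T)
    (hT' : G.IsNClique 3 T') (hne : T' ≠ T) {v : V} (hv : v ∈ T) (hv' : v ∈ T') :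
    ∃ d w, d ∉ T ∧ w ∈ T ∧ w ∈ T' ∧ w ≠ v ∧ G.Adj v d ∧ G.Adj w d := by
  have hTe : (T.erase v).card = 2 := by rw [Finset.card_erase_of_mem hv, hT.2]
  obtain ⟨x, y, hxy, hexy⟩ := Finset.card_eq_two.mp hTe
  have hxT : x ∈ T := Finset.mem_of_mem_erase (hexy ▸ (by simp : x ∈ ({x,y}:Finset V)))
  have hyT : y ∈ T := Finset.mem_of_mem_erase (hexy ▸ (by simp : y ∈ ({x,y}:Finset V)))
  have hxv : x ≠ v := Finset.ne_of_mem_erase (hexy ▸ (by simp : x ∈ ({x,y}:Finset V)))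
  have hyv : y ≠ v := Finset.ne_of_mem_erase (hexy ▸ (by simp : y ∈ ({x,y}:Finset V)))
  have hvx : G.Adj v x := hT.1 hv hxT (Ne.symm hxv)
  have hvy : G.Adj v y := hT.1 hv hyT (Ne.symm hyv)
  have hTeq : T = insert v {x, y} := by rw [← hexy, Finset.insert_erase hv]
  obtain ⟨d, hnf, hdx, hdy, hdv⟩ := extNbr G hcubic hvx hvy hxy
  have hdT : d ∉ T := by rw [hTeq]; simp [hdv, hdx, hdy]
  have hT'e : (T'.erase v).card = 2 := by rw [Finset.card_erase_of_mem hv', hT'.2]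
  obtain ⟨p, q, hpq, hepq⟩ := Finset.card_eq_two.mp hT'e
  have hpT' : p ∈ T' := Finset.mem_of_mem_erase (hepq ▸ (by simp : p ∈ ({p,q}:Finset V)))
  have hqT' : q ∈ T' := Finset.mem_of_mem_erase (hepq ▸ (by simp : q ∈ ({p,q}:Finset V)))
  have hpv : p ≠ v := Finset.ne_of_mem_erase (hepq ▸ (by simp : p ∈ ({p,q}:Finset V)))
  have hqv : q ≠ v := Finset.ne_of_mem_erase (hepq ▸ (by simp : q ∈ ({p,q}:Finset V)))
  have hvp : G.Adj v p := hT'.1 hv' hpT' (Ne.symm hpv)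
  have hvq : G.Adj v q := hT'.1 hv' hqT' (Ne.symm hqv)
  have hpqadj : G.Adj p q := hT'.1 hpT' hqT' hpq
  have hT'eq : T' = insert v {p, q} := by rw [← hepq, Finset.insert_erase hv']
  have hpmem : p ∈ ({x, y, d} : Finset V) := by rw [← hnf]; simpa using hvp
  have hqmem : q ∈ ({x, y, d} : Finset V) := by rw [← hnf]; simpa using hvq
  have hvd : G.Adj v d := by
    have : d ∈ G.neighborFinset v := by rw [hnf]; simp
    simpa using this
  simp only [Finset.mem_insert, Finset.mem_singleton] at hpmem hqmem
  have hnexy : ¬(({p, q} : Finset V) = {x, y}) := by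
    intro h; apply hne; rw [hT'eq, h, hTeq]
  rcases hpmem with hp | hp | hp <;> rcases hqmem with hq | hq | hq <;> subst hp <;>
    try subst hq
  · exact absurd rfl hpq
  · exact absurd rfl hnexy
  · exact ⟨q, p, hdT, hxT, hpT', hxv, hvd, hpqadj⟩
  · exact absurd (by rw [Finset.pair_comm]) hnexy
  · exact absurd rfl hpq
  · exact ⟨q, p, hdT, hyT, hpT', hyv, hvd, hpqadj⟩
  · exact ⟨p, q, hdT, hxT, hqT', hxv, hvd, hpqadj.symm⟩
  · exact ⟨p, q, hdT, hyT, hqT', hyv, hvd, hpqadj.symm⟩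
  · exact absurd rfl hpq

lemma uniqExt {V : Type*} [Fintype V] [DecidableEq V] (G : SimpleGraph V) [DecidableRel G.Adj]
    (hcubic : ∀ v, G.degree v = 3) {v x y z z' : V} (hvx : G.Adj v x) (hvy : G.Adj v y)
    (hxy : x ≠ y) (hz : G.Adj v z) (hz' : G.Adj v z') (h1 : z ≠ x) (h2 : z ≠ y)
    (h3 : z' ≠ x) (h4 : z' ≠ y) : z = z' := by
  obtain ⟨e, hnf, -, -, -⟩ := extNbr G hcubic hvx hvy hxy
  have hzm : z ∈ ({x, y, e} : Finset V) := by rw [← hnf]; simpa using hz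
  have hzm' : z' ∈ ({x, y, e} : Finset V) := by rw [← hnf]; simpa using hz'
  simp only [Finset.mem_insert, Finset.mem_singleton] at hzm hzm'
  rcases hzm with h | h | h <;> rcases hzm' with h' | h' | h' <;> simp_all

set_option maxHeartbeats 1000000 in
/-- For a triangle `T` of a connected cubic graph `G`, the number of vertices of `T`
lying in some triangle other than `T` is 0, 2 or 3; and if it is 3, then `G ≅ K₄`. -/
theorem stmt_4 {V : Type*} [Fintype V] [DecidableEq V] (G : SimpleGraph V)
    [DecidableRel G.Adj] (hconn : G.Connected) (hcubic : ∀ v, G.degree v = 3)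
    (T : Finset V) (hT : G.IsNClique 3 T) :
    ({v | v ∈ T ∧ ∃ T' : Finset V, G.IsNClique 3 T' ∧ T' ≠ T ∧ v ∈ T'}.ncard = 0 ∨
      {v | v ∈ T ∧ ∃ T' : Finset V, G.IsNClique 3 T' ∧ T' ≠ T ∧ v ∈ T'}.ncard = 2 ∨
      {v | v ∈ T ∧ ∃ T' : Finset V, G.IsNClique 3 T' ∧ T' ≠ T ∧ v ∈ T'}.ncard = 3) ∧
    ({v | v ∈ T ∧ ∃ T' : Finset V, G.IsNClique 3 T' ∧ T' ≠ T ∧ v ∈ T'}.ncard = 3 →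
      Nonempty (G ≃g (⊤ : SimpleGraph (Fin 4)))) := by
  set S := {v | v ∈ T ∧ ∃ T' : Finset V, G.IsNClique 3 T' ∧ T' ≠ T ∧ v ∈ T'} with hS
  have hsub : S ⊆ ↑T := fun v hv => hv.1
  have hle : S.ncard ≤ 3 := by
    have := Set.ncard_le_ncard hsub T.finite_toSet
    rwa [Set.ncard_coe_finset, hT.2] at this
  have hne1 : S.ncard ≠ 1 := by
    intro h
    obtain ⟨v, hv⟩ := Set.ncard_eq_one.mp h
    have hvS : v ∈ S := by rw [hv]; rfl
    obtain ⟨hvT, T', hT', hTne, hvT'⟩ := hvS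
    obtain ⟨d, w, _, hwT, hwT', hwv, _, _⟩ := otherTri G hcubic hT hT' hTne hvT hvT'
    have hwS : w ∈ S := ⟨hwT, T', hT', hTne, hwT'⟩
    rw [hv] at hwS
    exact hwv hwS
  refine ⟨by omega, fun h3 => ?_⟩
  -- S = T
  have hST : S = ↑T := by
    apply Set.eq_of_subset_of_ncard_le hsub _ T.finite_toSet
    rw [Set.ncard_coe_finset, hT.2, h3]
  obtain ⟨a, b, c, hab, hac, hbc, hTabc⟩ := SimpleGraph.is3Clique_iff.mp hT
  have haT : a ∈ T := by rw [hTabc]; simp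
  have hbT : b ∈ T := by rw [hTabc]; simp
  have hcT : c ∈ T := by rw [hTabc]; simp
  have haS : a ∈ S := hST ▸ (by exact_mod_cast haT)
  have hbS : b ∈ S := hST ▸ (by exact_mod_cast hbT)
  have hcS : c ∈ S := hST ▸ (by exact_mod_cast hcT)
  obtain ⟨-, T₁, hT₁, hT₁ne, haT₁⟩ := haS
  obtain ⟨-, T₂, hT₂, hT₂ne, hbT₂⟩ := hbS
  obtain ⟨-, T₃, hT₃, hT₃ne, hcT₃⟩ := hcS
  obtain ⟨d₁, w₁, hd₁T, hw₁T, -, hw₁a, had₁, hw₁d₁⟩ := otherTri G hcubic hT hT₁ hT₁ne haT haT₁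
  obtain ⟨d₂, w₂, hd₂T, hw₂T, -, hw₂b, hbd₂, hw₂d₂⟩ := otherTri G hcubic hT hT₂ hT₂ne hbT hbT₂
  obtain ⟨d₃, w₃, hd₃T, hw₃T, -, hw₃c, hcd₃, hw₃d₃⟩ := otherTri G hcubic hT hT₃ hT₃ne hcT hcT₃
  have hmemT : ∀ z, z ∈ T ↔ (z = a ∨ z = b ∨ z = c) := by
    intro z; rw [hTabc]; simp
  have hd₁ : d₁ ≠ a ∧ d₁ ≠ b ∧ d₁ ≠ c := by
    have := hd₁T; rw [hmemT] at this; tauto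
  have hd₂ : d₂ ≠ a ∧ d₂ ≠ b ∧ d₂ ≠ c := by
    have := hd₂T; rw [hmemT] at this; tauto
  have hd₃ : d₃ ≠ a ∧ d₃ ≠ b ∧ d₃ ≠ c := by
    have := hd₃T; rw [hmemT] at this; tauto
  -- common external neighbor
  have hmain : ∃ d, d ≠ a ∧ d ≠ b ∧ d ≠ c ∧ G.Adj a d ∧ G.Adj b d ∧ G.Adj c d := by
    have hw₁ : w₁ = b ∨ w₁ = c := by
      have := (hmemT w₁).mp hw₁T; tauto
    rcases hw₁ with h | h
    · rw [h] at hw₁d₁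
      -- d₁ adj a, b.  use c's triangle
      have hw₃ : w₃ = a ∨ w₃ = b := by
        have := (hmemT w₃).mp hw₃T; tauto
      rcases hw₃ with h' | h' <;> rw [h'] at hw₃d₃
      · have : d₁ = d₃ := uniqExt G hcubic hab hac hbc.ne had₁ hw₃d₃
          hd₁.2.1 hd₁.2.2 hd₃.2.1 hd₃.2.2
        exact ⟨d₁, hd₁.1, hd₁.2.1, hd₁.2.2, had₁, hw₁d₁, this ▸ hcd₃⟩
      · have : d₁ = d₃ := uniqExt G hcubic hab.symm hbc hac.ne hw₁d₁ hw₃d₃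
          hd₁.1 hd₁.2.2 hd₃.1 hd₃.2.2
        exact ⟨d₁, hd₁.1, hd₁.2.1, hd₁.2.2, had₁, hw₁d₁, this ▸ hcd₃⟩
    · rw [h] at hw₁d₁
      -- d₁ adj a, c.  use b's triangle
      have hw₂ : w₂ = a ∨ w₂ = c := by
        have := (hmemT w₂).mp hw₂T; tauto
      rcases hw₂ with h' | h' <;> rw [h'] at hw₂d₂
      · have : d₁ = d₂ := uniqExt G hcubic hab hac hbc.ne had₁ hw₂d₂
          hd₁.2.1 hd₁.2.2 hd₂.2.1 hd₂.2.2
        exact ⟨d₁, hd₁.1, hd₁.2.1, hd₁.2.2, had₁, this ▸ hbd₂, hw₁d₁⟩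
      · have : d₁ = d₂ := uniqExt G hcubic hac.symm hbc.symm hab.ne hw₁d₁ hw₂d₂
          hd₁.1 hd₁.2.1 hd₂.1 hd₂.2.1
        exact ⟨d₁, hd₁.1, hd₁.2.1, hd₁.2.2, had₁, this ▸ hbd₂, hw₁d₁⟩
  obtain ⟨d, hda', hdb', hdc', had, hbd, hcd⟩ := hmain
  -- basic distinctness (as ≠ facts)
  have hba : b ≠ a := hab.ne.symm
  have hca : c ≠ a := hac.ne.symm
  have hcb : c ≠ b := hbc.ne.symm
  have hda : d ≠ a := hda'
  have hdb : d ≠ b := hdb'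
  have hdc : d ≠ c := hdc'
  have hbda : G.Adj d a := had.symm
  have hbdb : G.Adj d b := hbd.symm
  have hbdc : G.Adj d c := hcd.symm
  -- neighborhoods
  have hnfa : G.neighborFinset a = {b, c, d} := by
    obtain ⟨e, hnf, he1, he2, -⟩ := extNbr G hcubic hab hac hbc.ne
    have : d ∈ ({b, c, e} : Finset V) := by rw [← hnf]; simpa using had
    simp only [Finset.mem_insert, Finset.mem_singleton] at this
    rcases this with h | h | h
    · exact absurd h hdb
    · exact absurd h hdc
    · rw [hnf, h]
  have hnfb : G.neighborFinset b = {a, c, d} := by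
    obtain ⟨e, hnf, he1, he2, -⟩ := extNbr G hcubic hab.symm hbc hac.ne
    have : d ∈ ({a, c, e} : Finset V) := by rw [← hnf]; simpa using hbd
    simp only [Finset.mem_insert, Finset.mem_singleton] at this
    rcases this with h | h | h
    · exact absurd h hda
    · exact absurd h hdc
    · rw [hnf, h]
  have hnfc : G.neighborFinset c = {a, b, d} := by
    obtain ⟨e, hnf, he1, he2, -⟩ := extNbr G hcubic hac.symm hbc.symm hab.ne
    have : d ∈ ({a, b, e} : Finset V) := by rw [← hnf]; simpa using hcd
    simp only [Finset.mem_insert, Finset.mem_singleton] at this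
    rcases this with h | h | h
    · exact absurd h hda
    · exact absurd h hdb
    · rw [hnf, h]
  have hnfd : G.neighborFinset d = {a, b, c} := by
    obtain ⟨e, hnf, he1, he2, -⟩ := extNbr G hcubic hbda hbdb hab.ne
    have : c ∈ ({a, b, e} : Finset V) := by rw [← hnf]; simpa using hbdc
    simp only [Finset.mem_insert, Finset.mem_singleton] at this
    rcases this with h | h | h
    · exact absurd h hca
    · exact absurd h hcb
    · rw [hnf, ← h]
  -- closure
  have hclosed : ∀ u z, (u = a ∨ u = b ∨ u = c ∨ u = d) → G.Adj u z →
      (z = a ∨ z = b ∨ z = c ∨ z = d) := by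
    intro u z hu huz
    have hz : z ∈ G.neighborFinset u := by simpa using huz
    rcases hu with h | h | h | h <;> subst h
    · rw [hnfa] at hz; simp at hz; tauto
    · rw [hnfb] at hz; simp at hz; tauto
    · rw [hnfc] at hz; simp at hz; tauto
    · rw [hnfd] at hz; simp at hz; tauto
  have hall : ∀ v, v = a ∨ v = b ∨ v = c ∨ v = d := by
    have hwalk : ∀ (u w : V), G.Walk u w → (u = a ∨ u = b ∨ u = c ∨ u = d) →
        (w = a ∨ w = b ∨ w = c ∨ w = d) := by
      intro u w p
      induction p with
      | nil => exact id
      | cons h q ih => intro hu; exact ih (hclosed _ _ hu h)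
    intro v
    obtain ⟨p⟩ := hconn.preconnected a v
    exact hwalk a v p (Or.inl rfl)
  -- all adjacencies
  have hadjall : ∀ u v : V, u ≠ v → G.Adj u v := by
    intro u v huv
    rcases hall u with h | h | h | h <;> rcases hall v with h' | h' | h' | h' <;>
      subst h <;> subst h' <;>
      first
      | exact absurd rfl huv
      | assumption
      | (apply SimpleGraph.Adj.symm; assumption)
  -- build iso
  classical
  let f : V → Fin 4 := fun v => if v = a then 0 else if v = b then 1 else if v = c then 2 else 3
  let g : Fin 4 → V := ![a, b, c, d]
  have hgf : ∀ v, g (f v) = v := by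
    intro v
    rcases hall v with h | h | h | h <;> subst h <;>
      simp [f, g, hba, hca, hcb, hda, hdb, hdc]
  have hfg : ∀ i, f (g i) = i := by
    intro i
    fin_cases i <;> simp [f, g, hba, hca, hcb, hda, hdb, hdc]
  have hinj : Function.Injective f := by
    intro u v h
    have := congrArg g h
    rwa [hgf, hgf] at this
  exact ⟨⟨⟨f, g, hgf, hfg⟩, by
    intro u v
    simp only [Equiv.coe_fn_mk, top_adj]
    constructor
    · intro h
      exact hadjall u v (fun he => h (he ▸ rfl))
    · intro h he
      exact h.ne (hinj he)⟩⟩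
end
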